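/- Let R > 0 and k > 0, and set f = 1. Consider the reduced closed-loop planar vector field F(x, θ) = (cos θ, k·(τ_ℓ(x,θ) − τ_r(x,θ))) on the region {(x,θ) : −R < x < R, π/4 < θ < 3π/4}, where τ_ℓ(x,θ) = 1 + (R + x + cos θ)/(sin θ − cos θ) and τ_r(x,θ) = 1 + (R − x − cos θ)/(sin θ + cos θ). Then (x,θ) = (0, π/2) is the unique point of this region at which F vanishes; that is, the centered configuration on the corridor center line with heading parallel to the walls is the unique equilibrium of the closed-loop steering dynamics. -/
import Mathlib


open Real

/-- Time-to-transit (focal length `f = 1`) of the left-wall feature registered at `-1`. -/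
noncomputable def tauL1 (R x θ : ℝ) : ℝ :=
  1 + (R + x + Real.cos θ) / (Real.sin θ - Real.cos θ)

/-- Time-to-transit (focal length `f = 1`) of the right-wall feature registered at `+1`. -/
noncomputable def tauR1 (R x θ : ℝ) : ℝ :=
  1 + (R - x - Real.cos θ) / (Real.sin θ + Real.cos θ)

/-- `(0, π/2)` is the unique equilibrium of the reduced closed-loop steering dynamics
`F(x, θ) = (cos θ, k (τ_ℓ - τ_r))` on the region `-R < x < R`, `π/4 < θ < 3π/4`. -/
theorem unique_equilibrium_centerline (R k : ℝ) (hR : 0 < R) (hk : 0 < k) :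
    ∀ x θ : ℝ, -R < x → x < R → π / 4 < θ → θ < 3 * π / 4 →
      ((Real.cos θ = 0 ∧ k * (tauL1 R x θ - tauR1 R x θ) = 0) ↔
        (x = 0 ∧ θ = π / 2)) := by
  intro x θ h1 h2 h3 h4
  have hpi := Real.pi_pos
  constructor
  · rintro ⟨hc, he⟩
    -- θ = π/2 from cos θ = 0 on (π/4, 3π/4)
    rcases Real.cos_eq_zero_iff.mp hc with ⟨n, hn⟩
    have hθ : θ = π / 2 := by
      rcases lt_trichotomy n 0 with h | h | h
      · exfalso
        have : (n : ℝ) ≤ -1 := by exact_mod_cast (by omega : n ≤ -1)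
        nlinarith [hn, h3]
      · rw [hn, h]; ring
      · exfalso
        have : (1 : ℝ) ≤ (n : ℝ) := by exact_mod_cast h
        nlinarith [hn, h4]
    subst hθ
    refine ⟨?_, rfl⟩
    simp only [tauL1, tauR1, Real.cos_pi_div_two, Real.sin_pi_div_two] at he
    have : k * (2 * x) = 0 := by linarith [he]; 
    have := mul_eq_zero.mp this
    rcases this with h | h
    · exact absurd h (ne_of_gt hk)
    · linarith
  · rintro ⟨hx, hθ⟩
    subst hx; subst hθ
    simp [tauL1, tauR1]
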